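/- Let a : ℤ → ℝ be a sequence with a(n) ≠ 0 for all n ∈ ℤ satisfying the Somos-4 recurrence a(n)·a(n+4) = a(n+1)·a(n+3) + a(n+2)^2 for all n ∈ ℤ. If S(a(0), a(1), a(2), a(3)) = 0, then for all n ∈ ℤ one has a(n)·a(n+8) = a(n+2)·a(n+6) + a(n+4)^2; in other words, both the even subsequence n ↦ a(2n) and the odd subsequence n ↦ a(2n+1) again satisfy the Somos-4 recurrence. -/

import Mathlib

/-- The quartic polynomial `S` associated to Somos-4 sequences with Somos-4
even and odd subsequences. -/
def somosS (a0 a1 a2 a3 : ℝ) : ℝ :=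
  a0 ^ 2 * a3 ^ 2 + a1 ^ 2 * a2 ^ 2 + a0 * a2 ^ 3 + a3 * a1 ^ 3 + 2 * a0 * a1 * a2 * a3

/-- One-step invariance of `somosS` along a Somos-4 recurrence. -/
lemma somosS_step (e0 e1 e2 e3 e4 : ℝ) (h : e0 * e4 = e1 * e3 + e2 ^ 2) :
    e0 * somosS e1 e2 e3 e4 = e4 * somosS e0 e1 e2 e3 := by
  simp only [somosS]
  linear_combination (e1 ^ 2 * e4 - e0 * e3 ^ 2) * h

/-- Key algebraic lemma: five consecutive Somos-4 relations together with the
vanishing of `somosS` on the first window yield the doubled relation. -/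
lemma somos_key (e0 e1 e2 e3 e4 e5 e6 e7 e8 : ℝ)
    (n0 : e0 ≠ 0) (n1 : e1 ≠ 0) (n2 : e2 ≠ 0) (n3 : e3 ≠ 0) (n4 : e4 ≠ 0)
    (h0 : e0 * e4 = e1 * e3 + e2 ^ 2)
    (h1 : e1 * e5 = e2 * e4 + e3 ^ 2)
    (h2 : e2 * e6 = e3 * e5 + e4 ^ 2)
    (h3 : e3 * e7 = e4 * e6 + e5 ^ 2)
    (h4 : e4 * e8 = e5 * e7 + e6 ^ 2)
    (hS : somosS e0 e1 e2 e3 = 0) :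
    e0 * e8 = e2 * e6 + e4 ^ 2 := by
  have hD : e0 ^ 4 * e1 ^ 3 * e2 ^ 2 * e3 * e4 ≠ 0 :=
    mul_ne_zero (mul_ne_zero (mul_ne_zero (mul_ne_zero
      (pow_ne_zero _ n0) (pow_ne_zero _ n1)) (pow_ne_zero _ n2)) n3) n4
  have key : (e0 ^ 4 * e1 ^ 3 * e2 ^ 2 * e3 * e4) * (e0 * e8)
      = (e0 ^ 4 * e1 ^ 3 * e2 ^ 2 * e3 * e4) * (e2 * e6 + e4 ^ 2) := by
    simp only [somosS] at hS
    linear_combination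
      (e0^4*e1^3*e3*e4^3 + e0^4*e1^2*e2^2*e4^3 + 3*e0^4*e1^2*e2*e3^2*e4^2 + 2*e0^4*e1^2*e3^4*e4 + e0^4*e1*e2^3*e3*e4^2 + 3*e0^4*e1*e2^2*e3^3*e4 + 3*e0^4*e1*e2*e3^5 + e0^4*e2^5*e4^2 + 3*e0^4*e2^4*e3^2*e4 + 3*e0^4*e2^3*e3^4 + e0^3*e1^4*e3^2*e4^2 + 3*e0^3*e1^3*e2*e3^3*e4 + 2*e0^3*e1^3*e3^5 + e0^3*e1^2*e2^4*e4^2 + 3*e0^3*e1^2*e2^3*e3^2*e4 + 4*e0^3*e1^2*e2^2*e3^4 + 2*e0^3*e1*e2^5*e3*e4 + 6*e0^3*e1*e2^4*e3^3 + e0^3*e2^7*e4 + 3*e0^3*e2^6*e3^2 + e0^2*e1^5*e3^3*e4 + e0^2*e1^4*e2^2*e3^2*e4 + 3*e0^2*e1^4*e2*e3^4 + e0^2*e1^3*e2^4*e3*e4 + 6*e0^2*e1^3*e2^3*e3^3 + e0^2*e1^2*e2^6*e4 + 5*e0^2*e1^2*e2^5*e3^2 + 3*e0^2*e1*e2^7*e3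 + e0^2*e2^9 + e0*e1^6*e3^4 + 2*e0*e1^5*e2^2*e3^3 + 2*e0*e1^4*e2^4*e3^2 + 2*e0*e1^3*e2^6*e3 + e0*e1^2*e2^8) * h0 +
      (e0^5*e1^2*e2^2*e5^2 + e0^5*e1^2*e2*e3*e4*e5 + e0^5*e1^2*e2*e4^3 + e0^5*e1^2*e3^3*e5 + 2*e0^5*e1^2*e3^2*e4^2 + e0^5*e1*e2^3*e4*e5 + e0^5*e1*e2^2*e3^2*e5 + e0^5*e1*e2^2*e3*e4^2 + 2*e0^5*e1*e2*e3^3*e4 + e0^5*e1*e3^5 + e0^5*e2^4*e4^2 + 2*e0^5*e2^3*e3^2*e4 + e0^5*e2^2*e3^4 - e0^4*e1^2*e2^2*e3^2*e4) * h1 +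
      (e0^5*e1^3*e2*e3*e6 + e0^5*e1^3*e2*e4*e5 + e0^5*e1^3*e3^2*e5 + e0^5*e1^3*e3*e4^2 - e0^4*e1^3*e2^2*e3*e4) * h2 +
      (e0^5*e1^3*e2^2*e5) * h3 +
      (e0^5*e1^3*e2^2*e3) * h4 +
      (e0^3*e1*e3^5 + e0^3*e2^2*e3^4 + e0^2*e1^2*e2*e3^4 + 3*e0^2*e1*e2^3*e3^3 + 2*e0^2*e2^5*e3^2 + e0*e1^4*e3^4 + 2*e0*e1^3*e2^2*e3^3 + 2*e0*e1^2*e2^4*e3^2 + 2*e0*e1*e2^6*e3 + e0*e2^8) * hS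
  exact mul_left_cancel₀ hD key

theorem stmt_0 (a : ℤ → ℝ) (hne : ∀ n : ℤ, a n ≠ 0)
    (hrec : ∀ n : ℤ, a n * a (n + 4) = a (n + 1) * a (n + 3) + a (n + 2) ^ 2)
    (hS : somosS (a 0) (a 1) (a 2) (a 3) = 0) :
    (∀ n : ℤ, a n * a (n + 8) = a (n + 2) * a (n + 6) + a (n + 4) ^ 2) ∧
    (∀ n : ℤ, a (2 * n) * a (2 * (n + 4)) =
      a (2 * (n + 1)) * a (2 * (n + 3)) + a (2 * (n + 2)) ^ 2) ∧
    (∀ n : ℤ, a (2 * n + 1) * a (2 * (n + 4) + 1) =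
      a (2 * (n + 1) + 1) * a (2 * (n + 3) + 1) + a (2 * (n + 2) + 1) ^ 2) := by
  -- the invariant vanishes on every window
  have hSall : ∀ n : ℤ, somosS (a n) (a (n + 1)) (a (n + 2)) (a (n + 3)) = 0 := by
    intro n
    induction n using Int.induction_on with
    | zero => simpa using hS
    | succ k ih =>
        have hstep := somosS_step (a k) (a (k + 1)) (a (k + 2)) (a (k + 3)) (a (k + 4))
          (hrec k)
        rw [ih, mul_zero] at hstep
        have := (mul_eq_zero.mp hstep).resolve_left (hne k)
        have e1 : (k : ℤ) + 1 + 1 = k + 2 := by ring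
        have e2 : (k : ℤ) + 1 + 2 = k + 3 := by ring
        have e3 : (k : ℤ) + 1 + 3 = k + 4 := by ring
        rw [e1, e2, e3]
        exact this
    | pred k ih =>
        have hr : a (-k - 1) * a (-k - 1 + 4) =
            a (-k - 1 + 1) * a (-k - 1 + 3) + a (-k - 1 + 2) ^ 2 := hrec (-k - 1)
        have hstep := somosS_step (a (-k - 1)) (a (-k - 1 + 1)) (a (-k - 1 + 2))
          (a (-k - 1 + 3)) (a (-k - 1 + 4)) hr
        have e0 : (-k : ℤ) - 1 + 1 = -k := by ring
        have e1 : (-k : ℤ) - 1 + 2 = -k + 1 := by ring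
        have e2 : (-k : ℤ) - 1 + 3 = -k + 2 := by ring
        have e3 : (-k : ℤ) - 1 + 4 = -k + 3 := by ring
        rw [e0, e1, e2, e3] at hstep
        rw [ih, mul_zero] at hstep
        have hz := (mul_eq_zero.mp hstep.symm).resolve_left (hne (-k + 3))
        rw [e0, e1, e2]
        exact hz
  have main : ∀ n : ℤ, a n * a (n + 8) = a (n + 2) * a (n + 6) + a (n + 4) ^ 2 := by
    intro n
    have h0 := hrec n
    have h1 := hrec (n + 1)
    have h2 := hrec (n + 2)
    have h3 := hrec (n + 3)
    have h4 := hrec (n + 4)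
    have e1 : n + 1 + 1 = n + 2 := by ring
    have e1b : n + 1 + 2 = n + 3 := by ring
    have e2 : n + 1 + 3 = n + 4 := by ring
    have e3 : n + 1 + 4 = n + 5 := by ring
    have e4 : n + 2 + 1 = n + 3 := by ring
    have e5 : n + 2 + 2 = n + 4 := by ring
    have e6 : n + 2 + 3 = n + 5 := by ring
    have e7 : n + 2 + 4 = n + 6 := by ring
    have e8 : n + 3 + 1 = n + 4 := by ring
    have e9 : n + 3 + 2 = n + 5 := by ring
    have e10 : n + 3 + 3 = n + 6 := by ring
    have e11 : n + 3 + 4 = n + 7 := by ring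
    have e12 : n + 4 + 1 = n + 5 := by ring
    have e13 : n + 4 + 2 = n + 6 := by ring
    have e14 : n + 4 + 3 = n + 7 := by ring
    have e15 : n + 4 + 4 = n + 8 := by ring
    rw [e1, e1b, e2, e3] at h1
    rw [e4, e5, e6, e7] at h2
    rw [e8, e9, e10, e11] at h3
    rw [e12, e13, e14, e15] at h4
    exact somos_key (a n) (a (n+1)) (a (n+2)) (a (n+3)) (a (n+4)) (a (n+5)) (a (n+6))
      (a (n+7)) (a (n+8)) (hne n) (hne (n+1)) (hne (n+2)) (hne (n+3)) (hne (n+4))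
      h0 h1 h2 h3 h4 (hSall n)
  refine ⟨main, ?_, ?_⟩
  · intro n
    have h := main (2 * n)
    have e1 : 2 * n + 8 = 2 * (n + 4) := by ring
    have e2 : 2 * n + 2 = 2 * (n + 1) := by ring
    have e3 : 2 * n + 6 = 2 * (n + 3) := by ring
    have e4 : 2 * n + 4 = 2 * (n + 2) := by ring
    rw [e1, e2, e3, e4] at h
    exact h
  · intro n
    have h := main (2 * n + 1)
    have e1 : 2 * n + 1 + 8 = 2 * (n + 4) + 1 := by ring
    have e2 : 2 * n + 1 + 2 = 2 * (n + 1) + 1 := by ring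
    have e3 : 2 * n + 1 + 6 = 2 * (n + 3) + 1 := by ring
    have e4 : 2 * n + 1 + 4 = 2 * (n + 2) + 1 := by ring
    rw [e1, e2, e3, e4] at h
    exact h
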